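/- Let l > 0 and x ∈ ℝ with 0 < x − y < 2l for a fixed real y (so x ≠ y mod 2l). Then limit as s → τ⁻ of ∑_{n∈ℤ, n≠0} [−(x − y + 2nl)/(2√(π(τ−s)³))]·exp(−(x − y + 2nl)²/(4(τ−s))) = 0. -/

import Mathlib

open Real Filter

lemma cube_le_exp (u : ℝ) (hu : 0 ≤ u) : u ^ 3 / 27 ≤ Real.exp u := by
  have h := Real.add_one_le_exp (u / 3)
  have h3 : Real.exp (u / 3) ^ 3 = Real.exp u := by
    rw [← Real.exp_nat_mul]; congr 1; ring
  have h0 : (0 : ℝ) ≤ u / 3 := by positivity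
  have h1 : u / 3 ≤ Real.exp (u / 3) := by linarith
  have h2 : (u / 3) ^ 3 ≤ Real.exp (u / 3) ^ 3 := pow_le_pow_left₀ h0 h1 3
  calc u ^ 3 / 27 = (u / 3) ^ 3 := by ring
    _ ≤ Real.exp (u / 3) ^ 3 := h2
    _ = Real.exp u := h3

lemma exp_neg_le (u : ℝ) (hu : 0 < u) : Real.exp (-u) ≤ 27 / u ^ 3 := by
  rw [Real.exp_neg, inv_le_comm₀ (Real.exp_pos u) (by positivity), inv_div]
  exact cube_le_exp u hu.le

lemma term_bound (a ε b : ℝ) (hε : 0 < ε) (hb : 0 < b) (hab : b ≤ |a|) :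
    |(-a) / (2 * Real.sqrt (π * ε ^ 3)) * Real.exp (-a ^ 2 / (4 * ε))|
      ≤ 864 * Real.sqrt (ε ^ 3) / b ^ 5 := by
  have ha : 0 < |a| := lt_of_lt_of_le hb hab
  have ha0 : a ≠ 0 := abs_pos.mp ha
  have ha2 : 0 < a ^ 2 := by positivity
  have hu : 0 < a ^ 2 / (4 * ε) := by positivity
  have hsq : 0 < Real.sqrt (ε ^ 3) := Real.sqrt_pos.mpr (by positivity)
  have hsqpi : Real.sqrt (ε ^ 3) ≤ Real.sqrt (π * ε ^ 3) := by
    apply Real.sqrt_le_sqrt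
    nlinarith [Real.pi_gt_three, pow_pos hε 3]
  have hsqpi0 : 0 < Real.sqrt (π * ε ^ 3) := lt_of_lt_of_le hsq hsqpi
  have hexp : Real.exp (-a ^ 2 / (4 * ε)) ≤ 27 * (4 * ε) ^ 3 / (a ^ 2) ^ 3 := by
    have := exp_neg_le (a ^ 2 / (4 * ε)) hu
    rw [neg_div] at *
    calc Real.exp (-(a ^ 2 / (4 * ε))) ≤ 27 / (a ^ 2 / (4 * ε)) ^ 3 := this
      _ = 27 * (4 * ε) ^ 3 / (a ^ 2) ^ 3 := by
          rw [div_pow]; field_simp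
  rw [abs_mul, abs_div]
  have h1 : |(-a)| = |a| := abs_neg a
  have h2 : |2 * Real.sqrt (π * ε ^ 3)| = 2 * Real.sqrt (π * ε ^ 3) := by
    rw [abs_of_pos (by positivity)]
  have h3 : |Real.exp (-a ^ 2 / (4 * ε))| = Real.exp (-a ^ 2 / (4 * ε)) :=
    abs_of_pos (Real.exp_pos _)
  rw [h1, h2, h3]
  have step1 : |a| / (2 * Real.sqrt (π * ε ^ 3)) * Real.exp (-a ^ 2 / (4 * ε))
      ≤ |a| / (2 * Real.sqrt (ε ^ 3)) * (27 * (4 * ε) ^ 3 / (a ^ 2) ^ 3) := by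
    apply mul_le_mul
    · apply div_le_div_of_nonneg_left ha.le (by positivity)
      linarith
    · exact hexp
    · exact (Real.exp_pos _).le
    · positivity
  refine step1.trans ?_
  have hae : (a ^ 2) ^ 3 = |a| ^ 6 := by
    rw [← sq_abs]; ring
  have hsq2 : Real.sqrt (ε ^ 3) ^ 2 = ε ^ 3 := Real.sq_sqrt (by positivity)
  have key : |a| / (2 * Real.sqrt (ε ^ 3)) * (27 * (4 * ε) ^ 3 / (a ^ 2) ^ 3)
      = 864 * (ε ^ 3 / Real.sqrt (ε ^ 3)) / |a| ^ 5 := by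
    rw [hae]
    field_simp
    ring
  rw [key, Real.div_sqrt]
  apply div_le_div_of_nonneg_left (by positivity) (by positivity)
  exact pow_le_pow_left₀ hb.le hab 5

theorem stmt_17 (l y x τ : ℝ) (hl : 0 < l) (h1 : 0 < x - y) (h2 : x - y < 2 * l) :
    Tendsto (fun s : ℝ => ∑' n : {n : ℤ // n ≠ 0},
        -(x - y + 2 * (n : ℤ) * l) / (2 * Real.sqrt (π * (τ - s) ^ 3))
          * Real.exp (-(x - y + 2 * (n : ℤ) * l) ^ 2 / (4 * (τ - s))))
      (nhdsWithin τ (Set.Iio τ)) (nhds 0) := by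
  set δ : ℝ := 2 * l - (x - y) with hδdef
  have hδ : 0 < δ := by simp only [hδdef]; linarith
  -- summability of 1/|n|^5 over nonzero integers
  have hsum : Summable (fun n : {n : ℤ // n ≠ 0} => (1 : ℝ) / |(n : ℤ)| ^ 5) := by
    have h5 : Summable fun n : ℤ => 1 / (n : ℝ) ^ 5 :=
      summable_one_div_int_pow.mpr (by norm_num)
    have habs : Summable fun n : ℤ => (1 : ℝ) / |(n : ℝ)| ^ 5 := by
      have := h5.abs
      refine this.congr fun n => ?_
      rw [abs_div, abs_one, abs_pow]
    refine (habs.comp_injective Subtype.val_injective).congr fun n => ?_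
    simp [Function.comp]
  set S : ℝ := ∑' n : {n : ℤ // n ≠ 0}, (1 : ℝ) / |(n : ℤ)| ^ 5 with hSdef
  have hSnn : 0 ≤ S := tsum_nonneg fun n => by positivity
  -- lower bound on |a_n|
  have hlow : ∀ n : ℤ, n ≠ 0 → δ * |(n : ℝ)| ≤ |x - y + 2 * (n : ℝ) * l| := by
    intro n hn
    rcases lt_or_gt_of_ne hn with hneg | hpos
    · have hn1 : (n : ℝ) ≤ -1 := by
        have : n ≤ -1 := by omega
        exact_mod_cast this
      have habs : |(n : ℝ)| = -(n : ℝ) := abs_of_neg (by linarith)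
      have hval : x - y + 2 * (n : ℝ) * l < 0 := by nlinarith
      rw [habs, abs_of_neg hval]
      nlinarith
    · have hn1 : (1 : ℝ) ≤ (n : ℝ) := by exact_mod_cast hpos
      have habs : |(n : ℝ)| = (n : ℝ) := abs_of_pos (by linarith)
      have hval : 0 < x - y + 2 * (n : ℝ) * l := by nlinarith
      rw [habs, abs_of_pos hval]
      nlinarith
  -- squeeze: norm of tsum ≤ C * sqrt((τ-s)^3)
  have hbound : ∀ s : ℝ, s < τ →
      ‖∑' n : {n : ℤ // n ≠ 0},
        -(x - y + 2 * (n : ℤ) * l) / (2 * Real.sqrt (π * (τ - s) ^ 3))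
          * Real.exp (-(x - y + 2 * (n : ℤ) * l) ^ 2 / (4 * (τ - s)))‖
      ≤ (864 / δ ^ 5 * S) * Real.sqrt ((τ - s) ^ 3) := by
    intro s hs
    have hε : 0 < τ - s := by linarith
    have hg : HasSum (fun n : {n : ℤ // n ≠ 0} =>
        864 * Real.sqrt ((τ - s) ^ 3) / δ ^ 5 * ((1 : ℝ) / |(n : ℤ)| ^ 5))
        (864 * Real.sqrt ((τ - s) ^ 3) / δ ^ 5 * S) := (hsum.hasSum).mul_left _
    have hb := tsum_of_norm_bounded hg (f := fun n : {n : ℤ // n ≠ 0} =>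
        -(x - y + 2 * (n : ℤ) * l) / (2 * Real.sqrt (π * (τ - s) ^ 3))
          * Real.exp (-(x - y + 2 * (n : ℤ) * l) ^ 2 / (4 * (τ - s)))) ?_
    · calc _ ≤ 864 * Real.sqrt ((τ - s) ^ 3) / δ ^ 5 * S := hb
        _ = (864 / δ ^ 5 * S) * Real.sqrt ((τ - s) ^ 3) := by ring
    · intro n
      have hn : (n : ℤ) ≠ 0 := n.2
      have hnR : (1 : ℝ) ≤ |((n : ℤ) : ℝ)| := by
        have : (1 : ℤ) ≤ |(n : ℤ)| := Int.one_le_abs hn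
        calc (1:ℝ) ≤ (|(n : ℤ)| : ℝ) := by exact_mod_cast this
          _ = |((n : ℤ) : ℝ)| := by push_cast; ring
      have hbpos : 0 < δ * |((n : ℤ) : ℝ)| := by positivity
      have hlb := hlow (n : ℤ) hn
      have := term_bound (x - y + 2 * ((n : ℤ) : ℝ) * l) (τ - s)
        (δ * |((n : ℤ) : ℝ)|) hε hbpos (hlb)
      have hcast : ((|(n : ℤ)| : ℤ) : ℝ) = |((n : ℤ) : ℝ)| := Int.cast_abs
      rw [Real.norm_eq_abs]
      refine this.trans (le_of_eq ?_)
      rw [hcast, mul_pow, mul_one_div, div_div]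
  -- the dominating function tends to 0
  have hdom : Tendsto (fun s : ℝ => (864 / δ ^ 5 * S) * Real.sqrt ((τ - s) ^ 3))
      (nhdsWithin τ (Set.Iio τ)) (nhds 0) := by
    have : Tendsto (fun s : ℝ => (864 / δ ^ 5 * S) * Real.sqrt ((τ - s) ^ 3))
        (nhds τ) (nhds ((864 / δ ^ 5 * S) * Real.sqrt ((τ - τ) ^ 3))) := by
      apply Tendsto.const_mul
      apply Real.continuous_sqrt.continuousAt.tendsto.comp
      exact ((tendsto_const_nhds.sub tendsto_id).pow 3)
    simp only [sub_self] at this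
    norm_num at this
    exact this.mono_left nhdsWithin_le_nhds
  apply squeeze_zero_norm' _ hdom
  filter_upwards [self_mem_nhdsWithin] with s hs
  exact hbound s hs
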